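/- Let H be a class of boolean functions on X with VC(H) < ∞ and LD(H) = ∞, and let n ≤ |X|. Then the transductive online mistake bound satisfies max(min(VC(H), n), ⌊log₂ n⌋) ≤ M(H,n) ≤ O(VC(H)·log(n/VC(H))); in particular M(H,n) = Θ(log n) for fixed H. -/

import Mathlib

open scoped Classical

/-- Number of mistakes made by learner strategy `A` in the transductive online game of
length `n`, when the adversary presents the sequence `x` and labels according to `h`. -/
noncomputable def mistakes {X Y : Type*} {n : ℕ} (A : (Fin n → X) → List Y → Y)
    (x : Fin n → X) (h : X → Y) : ℕ :=
  (Finset.univ.filter (fun t : Fin n =>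
    A x (List.ofFn (fun i : Fin t.1 => h (x ⟨i.1, i.2.trans t.2⟩))) ≠ h (x t))).card

/-- `H` shatters the finite set `s`. -/
def Shatters {X : Type*} (H : Set (X → Bool)) (s : Finset X) : Prop :=
  ∀ f : X → Bool, ∃ h ∈ H, ∀ a ∈ s, h a = f a

/-- The VC dimension of `H`, as an extended natural number. -/
noncomputable def VCdim {X : Type*} (H : Set (X → Bool)) : ℕ∞ :=
  sSup {e : ℕ∞ | ∃ s : Finset X, (s.card : ℕ∞) = e ∧ Shatters H s}

/-- `H` shatters some Littlestone tree of depth `d` (nodes indexed by binary strings of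
length `< d`). -/
def LDge {X : Type*} (H : Set (X → Bool)) (d : ℕ) : Prop :=
  ∃ x : List Bool → X, ∀ σ : List Bool, σ.length = d →
    ∃ h ∈ H, ∀ i : ℕ, ∀ hi : i < σ.length, h (x (σ.take i)) = σ.get ⟨i, hi⟩

/-- The Littlestone dimension of `H`, as an extended natural number. -/
noncomputable def Ldim {X : Type*} (H : Set (X → Bool)) : ℕ∞ :=
  sSup {e : ℕ∞ | ∃ d : ℕ, e = d ∧ LDge H d}

section Basics
variable {X : Type*} {H : Set (X → Bool)}

lemma shatters_mono {s t : Finset X} (hs : Shatters H s) (hts : t ⊆ s) : Shatters H t := by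
  intro f
  obtain ⟨h, hH, hf⟩ := hs f
  exact ⟨h, hH, fun a ha => hf a (hts ha)⟩

lemma ldge_mono {d d' : ℕ} (hdd : d ≤ d') (h : LDge H d') : LDge H d := by
  obtain ⟨x, hx⟩ := h
  refine ⟨x, fun σ hσ => ?_⟩
  obtain ⟨h, hH, hh⟩ := hx (σ ++ List.replicate (d' - d) false) (by simp [hσ]; omega)
  refine ⟨h, hH, fun i hi => ?_⟩
  have hi' : i < (σ ++ List.replicate (d' - d) false).length := by simp; omega
  have := hh i hi'
  rw [List.take_append_of_le_length (by omega)] at this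
  simpa [List.getElem_append_left hi] using this

lemma ldge_all (hLD : Ldim H = ⊤) (d : ℕ) : LDge H d := by
  by_contra hcon
  have hub : ∀ e ∈ {e : ℕ∞ | ∃ d : ℕ, e = d ∧ LDge H d}, e ≤ (d : ℕ∞) := by
    rintro e ⟨d', rfl, hd'⟩
    by_contra hlt
    exact hcon (ldge_mono (by exact_mod_cast le_of_not_ge hlt) hd')
  have := sSup_le hub
  rw [Ldim] at hLD
  rw [hLD] at this
  exact (ENat.coe_lt_top d).not_ge this

lemma H_nonempty (hLD : Ldim H = ⊤) : H.Nonempty := by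
  obtain ⟨x, hx⟩ := ldge_all hLD 0
  obtain ⟨h, hH, -⟩ := hx [] rfl
  exact ⟨h, hH⟩

lemma shatters_card_le {v : ℕ} (hVC : VCdim H = (v : ℕ∞)) {s : Finset X}
    (hs : Shatters H s) : s.card ≤ v := by
  have : (s.card : ℕ∞) ≤ VCdim H := le_sSup ⟨s, rfl, hs⟩
  rw [hVC] at this
  exact_mod_cast this

lemma exists_shattered {v : ℕ} (hVC : VCdim H = (v : ℕ∞)) (hne : H.Nonempty)
    {m : ℕ} (hm : m ≤ v) : ∃ s : Finset X, s.card = m ∧ Shatters H s := by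
  rcases Nat.eq_zero_or_pos v with rfl | hv
  · refine ⟨∅, by simpa using hm.antisymm (Nat.zero_le m) |>.symm ▸ rfl, fun f => ?_⟩
    obtain ⟨h, hH⟩ := hne
    exact ⟨h, hH, by simp⟩
  · -- attainment at v
    have hex : ∃ s : Finset X, s.card = v ∧ Shatters H s := by
      by_contra hcon
      push_neg at hcon
      have hub : ∀ e ∈ {e : ℕ∞ | ∃ s : Finset X, (s.card : ℕ∞) = e ∧ Shatters H s},
          e ≤ ((v - 1 : ℕ) : ℕ∞) := by
        rintro e ⟨s, rfl, hs⟩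
        have h1 := shatters_card_le hVC hs
        have h2 := hcon s
        have : s.card ≤ v - 1 := by
          rcases Nat.lt_or_ge s.card v with h | h
          · omega
          · exact absurd (le_antisymm h1 h) (fun he => h2 he hs)
        exact_mod_cast this
      have := sSup_le hub
      rw [VCdim] at hVC
      rw [hVC] at this
      have : v ≤ v - 1 := by exact_mod_cast this
      omega
    obtain ⟨s, hcard, hs⟩ := hex
    obtain ⟨t, hts, htc⟩ := Finset.exists_subset_card_eq (s := s) (n := m) (by omega)
    exact ⟨t, htc, shatters_mono hs hts⟩

end Basics

section
section Game
variable {X : Type*}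

/-- mistakes in the list game -/
def mist : (List Bool → Bool) → List X → (X → Bool) → ℕ
  | _, [], _ => 0
  | L, z :: zs, h => (if L [] = h z then 0 else 1) + mist (fun l => L (h z :: l)) zs h

lemma mist_append (L : List Bool → Bool) (us vs : List X) (h : X → Bool) :
    mist L (us ++ vs) h = mist L us h + mist (fun l => L (us.map h ++ l)) vs h := by
  induction us generalizing L with
  | nil => simp [mist]
  | cons z us ih =>
      simp only [List.cons_append, mist, List.map_cons, List.cons_append]
      rw [ih]
      ring

/-- the binary-search gadget predicate -/
inductive Good : ℕ → Set (X → Bool) → List X → Prop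
  | zero (F : Set (X → Bool)) (hF : F.Nonempty) : Good 0 F []
  | succ (k : ℕ) (F F0 F1 : Set (X → Bool)) (z : X) (us vs : List X) (ws : List Bool)
      (h0 : F0 ⊆ F) (h1 : F1 ⊆ F)
      (hz0 : ∀ f ∈ F0, f z = false) (hz1 : ∀ f ∈ F1, f z = true)
      (hw : ∀ f ∈ F1, us.map f = ws)
      (g0 : Good k F0 us) (g1 : Good k F1 vs) : Good (k + 1) F (z :: (us ++ vs))

lemma Good.length {k : ℕ} {F : Set (X → Bool)} {zs : List X} (hg : Good k F zs) :
    zs.length = 2 ^ k - 1 := by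
  induction hg with
  | zero => simp
  | succ k F F0 F1 z us vs ws h0 h1 hz0 hz1 hw g0 g1 ih0 ih1 =>
      simp only [List.length_cons, List.length_append, ih0, ih1]
      have : 1 ≤ 2 ^ k := Nat.one_le_two_pow
      rw [pow_succ]
      omega

lemma Good.force {k : ℕ} {F : Set (X → Bool)} {zs : List X} (hg : Good k F zs) :
    ∀ L : List Bool → Bool, ∃ h ∈ F, k ≤ mist L zs h := by
  induction hg with
  | zero F hF =>
      intro L
      exact ⟨hF.choose, hF.choose_spec, Nat.zero_le _⟩
  | succ k F F0 F1 z us vs ws h0 h1 hz0 hz1 hw g0 g1 ih0 ih1 =>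
      intro L
      by_cases hL : L [] = true
      · -- adversary answers false; true function from F0
        obtain ⟨h, hh, hm⟩ := ih0 (fun l => L (false :: l))
        refine ⟨h, h0 hh, ?_⟩
        have hz := hz0 h hh
        simp only [mist, hz, hL, mist_append]
        have : (if true = false then 0 else 1) = 1 := rfl
        omega
      · obtain ⟨h, hh, hm⟩ := ih1 (fun l => L (true :: (ws ++ l)))
        refine ⟨h, h1 hh, ?_⟩
        have hz := hz1 h hh
        simp only [mist, hz, mist_append, hw h hh]
        simp only [Bool.not_eq_true] at hL
        simp [hL]
        omega
end Game
end

section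
universe u
variable {X : Type u}

def LDge' {X : Type*} (H : Set (X → Bool)) (d : ℕ) : Prop :=
  ∃ x : List Bool → X, ∀ σ : List Bool, σ.length = d →
    ∃ h ∈ H, ∀ i : ℕ, ∀ hi : i < σ.length, h (x (σ.take i)) = σ.get ⟨i, hi⟩

/-- A shattered Littlestone tree of depth `D` with chosen branch functions. -/
structure STree (X : Type u) (H : Set (X → Bool)) (D : ℕ) where
  pt : List Bool → X
  fn : List Bool → X → Bool
  mem : ∀ σ : List Bool, σ.length = D → fn σ ∈ H
  consistent : ∀ σ : List Bool, σ.length = D → ∀ i : ℕ, i < D →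
    fn σ (pt (σ.take i)) = σ.getD i false

namespace STree

def branchSet {H : Set (X → Bool)} {D : ℕ} (T : STree X H D) : Set (X → Bool) :=
  {h | ∃ σ : List Bool, σ.length = D ∧ T.fn σ = h}

lemma branchSet_subset {H : Set (X → Bool)} {D : ℕ} (T : STree X H D) :
    T.branchSet ⊆ H := by
  rintro h ⟨σ, hσ, rfl⟩
  exact T.mem σ hσ

/-- weaken the class -/
def relax {H H' : Set (X → Bool)} {D : ℕ} (T : STree X H D) (hHH : H ⊆ H') :
    STree X H' D where
  pt := T.pt
  fn := T.fn
  mem σ hσ := hHH (T.mem σ hσ)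
  consistent := T.consistent

@[simp] lemma branchSet_relax {H H' : Set (X → Bool)} {D : ℕ} (T : STree X H D)
    (hHH : H ⊆ H') : (T.relax hHH).branchSet = T.branchSet := rfl

/-- subtree below the `b`-child of the root -/
def subtree {H : Set (X → Bool)} {D : ℕ} (T : STree X H (D + 1)) (b : Bool) :
    STree X H D where
  pt σ := T.pt (b :: σ)
  fn σ := T.fn (b :: σ)
  mem σ hσ := T.mem (b :: σ) (by simp [hσ])
  consistent σ hσ i hi := by
    have := T.consistent (b :: σ) (by simp [hσ]) (i + 1) (by omega)
    simpa using this

lemma branchSet_subtree {H : Set (X → Bool)} {D : ℕ} (T : STree X H (D + 1)) (b : Bool) :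
    (T.subtree b).branchSet ⊆ T.branchSet := by
  rintro h ⟨σ, hσ, rfl⟩
  exact ⟨b :: σ, by simp [hσ], rfl⟩

lemma subtree_root_val {H : Set (X → Bool)} {D : ℕ} (T : STree X H (D + 1)) (b : Bool)
    {h : X → Bool} (hh : h ∈ (T.subtree b).branchSet) : h (T.pt []) = b := by
  obtain ⟨σ, hσ, rfl⟩ := hh
  have := T.consistent (b :: σ) (by simp [hσ]) 0 (by omega)
  simpa [subtree] using this

/-- truncation to a smaller depth -/
def trunc {H : Set (X → Bool)} {D : ℕ} (T : STree X H D) (D' : ℕ) (hD' : D' ≤ D) :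
    STree X H D' where
  pt := T.pt
  fn σ := T.fn (σ ++ List.replicate (D - D') false)
  mem σ hσ := T.mem _ (by simp [hσ]; omega)
  consistent σ hσ i hi := by
    have hlen : (σ ++ List.replicate (D - D') false).length = D := by simp [hσ]; omega
    have := T.consistent (σ ++ List.replicate (D - D') false) hlen i (by omega)
    rwa [List.take_append_of_le_length (by omega), List.getD_append _ _ _ _ (by omega)] at this

lemma branchSet_trunc {H : Set (X → Bool)} {D : ℕ} (T : STree X H D) (D' : ℕ)
    (hD' : D' ≤ D) : (T.trunc D' hD').branchSet ⊆ T.branchSet := by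
  rintro h ⟨σ, hσ, rfl⟩
  exact ⟨_, by simp [hσ]; omega, rfl⟩

/-- the canonical (all-false branch) function -/
noncomputable def canon {H : Set (X → Bool)} {D : ℕ} (T : STree X H D) : X → Bool :=
  T.fn (List.replicate D false)

lemma canon_mem_branchSet {H : Set (X → Bool)} {D : ℕ} (T : STree X H D) :
    T.canon ∈ T.branchSet := ⟨_, by simp, rfl⟩

/-- depth-0 tree from a single function -/
def single {H : Set (X → Bool)} (z : List Bool → X) (h : X → Bool) (hh : h ∈ H) :
    STree X H 0 where
  pt := z
  fn _ := h
  mem σ _ := hh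
  consistent σ hσ i hi := by omega

/-- glue two trees below a new root point -/
def glue {H0 H1 : Set (X → Bool)} {m : ℕ} (z : X) (S0 : STree X H0 m) (S1 : STree X H1 m)
    (h0 : ∀ h ∈ H0, h z = false) (h1 : ∀ h ∈ H1, h z = true) :
    STree X (H0 ∪ H1) (m + 1) where
  pt σ := match σ with
    | [] => z
    | false :: σ' => S0.pt σ'
    | true :: σ' => S1.pt σ'
  fn σ := match σ with
    | [] => fun _ => false
    | false :: σ' => S0.fn σ'
    | true :: σ' => S1.fn σ'
  mem σ hσ := by
    match σ with
    | [] => simp at hσ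
    | false :: σ' => exact Or.inl (S0.mem σ' (by simpa using hσ))
    | true :: σ' => exact Or.inr (S1.mem σ' (by simpa using hσ))
  consistent σ hσ i hi := by
    match σ with
    | [] => simp at hσ
    | (b : Bool) :: σ' =>
      have hσ' : σ'.length = m := by simpa using hσ
      match i with
      | 0 =>
          simp only [List.take_zero, List.getD_cons_zero]
          cases b
          · exact h0 _ (S0.mem σ' hσ')
          · exact h1 _ (S1.mem σ' hσ')
      | (i + 1) =>
          simp only [List.take_succ_cons, List.getD_cons_succ]
          cases b
          · exact S0.consistent σ' hσ' i (by omega)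
          · exact S1.consistent σ' hσ' i (by omega)

end STree
end

section
universe u
variable {X : Type u}

namespace STree

/-- Tree Ramsey: colouring branch functions, some colour class contains a deep subtree. -/
lemma ramsey {K : Type*} [Fintype K] (col : (X → Bool) → K) :
    ∀ (D : ℕ) {H : Set (X → Bool)} (T : STree X H D),
    ∃ F : K → ℕ, (D + 1 ≤ ∑ w, F w) ∧
      ∀ w, 1 ≤ F w → Nonempty (STree X (T.branchSet ∩ col ⁻¹' {w}) (F w - 1)) := by
  intro D
  induction D with
  | zero =>
      intro H T
      refine ⟨fun w => if w = col (T.fn []) then 1 else 0, by simp, fun w hw => ?_⟩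
      have hww : w = col (T.fn []) := by by_contra hc; simp [hc] at hw
      dsimp only
      rw [if_pos hww]
      exact ⟨single (H := T.branchSet ∩ col ⁻¹' {w}) T.pt (T.fn [])
        ⟨⟨[], rfl, rfl⟩, by simp [hww]⟩⟩
  | succ D ih =>
      intro H T
      obtain ⟨F0, hs0, ht0⟩ := ih (T.subtree false)
      obtain ⟨F1, hs1, ht1⟩ := ih (T.subtree true)
      set c₀ := col T.canon with hc₀
      set m := min (F0 c₀) (F1 c₀) with hm
      refine ⟨fun w => if w = c₀ then m + 1 else max (F0 w) (F1 w), ?_, ?_⟩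
      · -- sum bound
        rcases le_total (F0 c₀) (F1 c₀) with hle | hle
        · calc D + 1 + 1 ≤ (∑ w, F0 w) + 1 := by omega
            _ = ∑ w, (F0 w + if w = c₀ then 1 else 0) := by
                rw [Finset.sum_add_distrib]; simp
            _ ≤ _ := Finset.sum_le_sum (fun w _ => by
                by_cases hw : w = c₀ <;> simp [hw, hm] <;> omega)
        · calc D + 1 + 1 ≤ (∑ w, F1 w) + 1 := by omega
            _ = ∑ w, (F1 w + if w = c₀ then 1 else 0) := by
                rw [Finset.sum_add_distrib]; simp
            _ ≤ _ := Finset.sum_le_sum (fun w _ => by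
                by_cases hw : w = c₀ <;> simp [hw, hm] <;> omega)
      · intro w hw
        dsimp only at hw ⊢
        by_cases hwc : w = c₀
        · subst hwc
          rw [if_pos rfl] at hw ⊢
          rcases Nat.eq_zero_or_pos m with hm0 | hmpos
          · rw [hm0]
            exact ⟨single (H := T.branchSet ∩ col ⁻¹' {c₀}) T.pt T.canon
              ⟨T.canon_mem_branchSet, by simp [hc₀]⟩⟩
          · have h0pos : 1 ≤ F0 c₀ := le_trans hmpos (by omega)
            have h1pos : 1 ≤ F1 c₀ := le_trans hmpos (by omega)
            obtain ⟨S0⟩ := ht0 c₀ h0pos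
            obtain ⟨S1⟩ := ht1 c₀ h1pos
            have hm0' : m - 1 ≤ F0 c₀ - 1 := by omega
            have hm1' : m - 1 ≤ F1 c₀ - 1 := by omega
            set S0' := S0.trunc (m - 1) hm0'
            set S1' := S1.trunc (m - 1) hm1'
            have hz0 : ∀ h ∈ (T.subtree false).branchSet ∩ col ⁻¹' {c₀}, h (T.pt []) = false :=
              fun h hh => T.subtree_root_val false hh.1
            have hz1 : ∀ h ∈ (T.subtree true).branchSet ∩ col ⁻¹' {c₀}, h (T.pt []) = true :=
              fun h hh => T.subtree_root_val true hh.1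
            have hglue := glue (T.pt []) S0' S1' hz0 hz1
            have hsub : ((T.subtree false).branchSet ∩ col ⁻¹' {c₀}) ∪
                ((T.subtree true).branchSet ∩ col ⁻¹' {c₀}) ⊆ T.branchSet ∩ col ⁻¹' {c₀} := by
              rintro h (⟨ha, hb⟩ | ⟨ha, hb⟩)
              · exact ⟨T.branchSet_subtree false ha, hb⟩
              · exact ⟨T.branchSet_subtree true ha, hb⟩
            have heq : m + 1 - 1 = (m - 1) + 1 := by omega
            rw [heq]
            exact ⟨hglue.relax hsub⟩
        · rw [if_neg hwc] at hw ⊢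
          rcases le_total (F0 w) (F1 w) with hle | hle
          · rw [max_eq_right hle] at hw ⊢
            obtain ⟨S⟩ := ht1 w (by omega)
            exact ⟨S.relax (fun h hh => ⟨T.branchSet_subtree true hh.1, hh.2⟩)⟩
          · rw [max_eq_left hle] at hw ⊢
            obtain ⟨S⟩ := ht0 w (by omega)
            exact ⟨S.relax (fun h hh => ⟨T.branchSet_subtree false hh.1, hh.2⟩)⟩

/-- Selection: a deep subtree all of whose branch functions agree on a given point list. -/
lemma select {H : Set (X → Bool)} {D : ℕ} (T : STree X H D) (us : List X) (m : ℕ)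
    (hD : 2 ^ us.length * (m + 1) ≤ D + 1) :
    ∃ ws : List Bool, Nonempty (STree X (T.branchSet ∩ {h | us.map h = ws}) m) := by
  set col : (X → Bool) → (Fin us.length → Bool) := fun h i => h us[i] with hcol
  obtain ⟨F, hsum, htree⟩ := ramsey col D T
  have hcard : Fintype.card (Fin us.length → Bool) = 2 ^ us.length := by simp
  have hex : ∃ w, m + 1 ≤ F w := by
    by_contra hc
    push_neg at hc
    have : ∑ w, F w ≤ ∑ _w : Fin us.length → Bool, m :=
      Finset.sum_le_sum (fun w _ => by have := hc w; omega)
    simp only [Finset.sum_const, Finset.card_univ, hcard, smul_eq_mul] at this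
    have hrel : 2 ^ us.length * m + 2 ^ us.length = 2 ^ us.length * (m + 1) := by ring
    have hpos : 1 ≤ 2 ^ us.length := Nat.one_le_two_pow
    omega
  obtain ⟨w, hw⟩ := hex
  obtain ⟨S⟩ := htree w (by omega)
  refine ⟨List.ofFn w, ⟨(S.trunc m (by omega)).relax ?_⟩⟩
  rintro h ⟨h1, h2⟩
  refine ⟨h1, ?_⟩
  simp only [Set.mem_preimage, Set.mem_singleton_iff] at h2
  simp only [Set.mem_setOf_eq]
  apply List.ext_getElem
  · simp
  · intro i hi1 hi2
    have hi' : i < us.length := by simpa using hi1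
    have hcv := congrFun h2 ⟨i, hi'⟩
    simp only [hcol] at hcv
    simpa using hcv

end STree
end

section
universe u
variable {X : Type u}

def Ebound : ℕ → ℕ
  | 0 => 0
  | k + 1 => 2 ^ (2 ^ k) * (Ebound k + 2) + 1

lemma build_good : ∀ (k : ℕ) {H' : Set (X → Bool)} {D : ℕ} (T : STree X H' D),
    Ebound k ≤ D → ∃ (zs : List X) (F : Set (X → Bool)),
      F ⊆ T.branchSet ∧ Good k F zs := by
  intro k
  induction k with
  | zero =>
      intro H' D T _
      exact ⟨[], {T.canon}, by simpa using T.canon_mem_branchSet,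
        Good.zero _ ⟨T.canon, rfl⟩⟩
  | succ k ih =>
      intro H' D T hD
      have hpow : 1 ≤ 2 ^ (2 ^ k) := Nat.one_le_two_pow
      match D, T with
      | 0, _ => exact absurd hD (by simp [Ebound])
      | D' + 1, T =>
        simp only [Ebound] at hD
        have hD' : Ebound k ≤ D' := by
          have h2 : Ebound k + 2 ≤ 2 ^ (2 ^ k) * (Ebound k + 2) :=
            Nat.le_mul_of_pos_left _ (by omega)
          omega
        obtain ⟨us, F0, hF0, g0⟩ := ih (T.subtree false) hD'
        have hq : us.length = 2 ^ k - 1 := g0.length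
        have hsel : 2 ^ us.length * (Ebound k + 1) ≤ D' + 1 := by
          have h1 : 2 ^ us.length * (Ebound k + 1) ≤ 2 ^ (2 ^ k) * (Ebound k + 2) := by
            apply Nat.mul_le_mul
            · refine Nat.pow_le_pow_right (by norm_num) ?_
              have h3 : 1 ≤ 2 ^ k := Nat.one_le_two_pow
              omega
            · omega
          omega
        obtain ⟨ws, ⟨T1'⟩⟩ := (T.subtree true).select us (Ebound k) hsel
        obtain ⟨vs, F1, hF1, g1⟩ := ih T1' le_rfl
        have hF1' : F1 ⊆ (T.subtree true).branchSet ∩ {h | us.map h = ws} :=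
          fun f hf => T1'.branchSet_subset (hF1 hf)
        refine ⟨T.pt [] :: (us ++ vs), F0 ∪ F1, ?_, ?_⟩
        · rintro f (hf | hf)
          · exact T.branchSet_subtree false (hF0 hf)
          · exact T.branchSet_subtree true (hF1' hf).1
        · refine Good.succ k _ F0 F1 _ us vs ws Set.subset_union_left
            Set.subset_union_right ?_ ?_ ?_ g0 g1
          · exact fun f hf => T.subtree_root_val false (hF0 hf)
          · exact fun f hf => T.subtree_root_val true (hF1' hf).1
          · exact fun f hf => (hF1' hf).2

lemma exists_stree {H : Set (X → Bool)} (hLD : ∀ d, LDge' H d) (D : ℕ) :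
    Nonempty (STree X H D) := by
  obtain ⟨x, hx⟩ := hLD D
  refine ⟨⟨x, fun σ => if hσ : σ.length = D then (hx σ hσ).choose else fun _ => false,
    fun σ hσ => ?_, fun σ hσ i hi => ?_⟩⟩
  · simp only [dif_pos hσ]
    exact (hx σ hσ).choose_spec.1
  · simp only [dif_pos hσ]
    have hsp := (hx σ hσ).choose_spec.2 i (by omega)
    rw [hsp, List.getD_eq_getElem _ _ (by omega)]
    simp

lemma log_force {H : Set (X → Bool)} (hLD : ∀ d, LDge' H d) (k : ℕ) :
    ∃ zs : List X, zs.length = 2 ^ k - 1 ∧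
      ∀ L : List Bool → Bool, ∃ h ∈ H, k ≤ mist L zs h := by
  obtain ⟨T⟩ := exists_stree hLD (Ebound k)
  obtain ⟨zs, F, hF, hg⟩ := build_good k T le_rfl
  refine ⟨zs, hg.length, fun L => ?_⟩
  obtain ⟨h, hh, hm⟩ := hg.force L
  exact ⟨h, T.branchSet_subset (hF hh), hm⟩
end

section
universe u
variable {X : Type u}

lemma mist_eq_sum : ∀ (zs : List X) (L : List Bool → Bool) (h : X → Bool),
    mist L zs h = ∑ t : Fin zs.length,
      if L ((zs.take t.1).map h) ≠ h (zs.get t) then 1 else 0 := by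
  intro zs
  induction zs with
  | nil => intro L h; simp [mist]
  | cons z zs ih =>
      intro L h
      calc mist L (z :: zs) h
          = (if L [] ≠ h z then 1 else 0) + mist (fun l => L (h z :: l)) zs h := by
            by_cases hc : L [] = h z <;> simp [mist, hc]
        _ = (if L [] ≠ h z then 1 else 0) + ∑ t : Fin zs.length,
              (if L (h z :: (zs.take t.1).map h) ≠ h (zs.get t) then 1 else 0) := by
            rw [ih (fun l => L (h z :: l)) h]
        _ = ∑ t : Fin (zs.length + 1),
              (if L (((z :: zs).take t.1).map h) ≠ h ((z :: zs).get t) then 1 else 0) := by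
            rw [Fin.sum_univ_succ]
            congr 1
        _ = ∑ t : Fin (z :: zs).length,
              (if L (((z :: zs).take t.1).map h) ≠ h ((z :: zs).get t) then 1 else 0) := rfl

lemma mist_le_mistakes {n : ℕ} (A : (Fin n → X) → List Bool → Bool) (x : Fin n → X)
    (zs : List X) (h : X → Bool) (hlen : zs.length ≤ n)
    (hx : ∀ (i : ℕ) (hi : i < zs.length), x ⟨i, lt_of_lt_of_le hi hlen⟩ = zs.get ⟨i, hi⟩) :
    mist (A x) zs h ≤ mistakes A x h := by
  rw [mist_eq_sum, mistakes]
  rw [← Finset.card_filter]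
  apply Finset.card_le_card_of_injOn (fun t => ⟨t.1, lt_of_lt_of_le t.2 hlen⟩)
  · intro t ht
    simp only [Finset.mem_coe, Finset.mem_filter, Finset.mem_univ, true_and] at ht ⊢
    have hofn : List.ofFn (fun i : Fin t.1 => h (x ⟨i.1, i.2.trans (lt_of_lt_of_le t.2 hlen)⟩))
        = (zs.take t.1).map h := by
      apply List.ext_getElem
      · simp only [List.length_ofFn, List.length_map, List.length_take]
        exact (min_eq_left t.2.le).symm
      · intro i hi1 hi2
        have hit : i < t.1 := by simpa using hi1
        have hizs : i < zs.length := lt_trans hit t.2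
        simp only [List.getElem_ofFn, List.getElem_map, List.getElem_take]
        rw [hx i hizs]
        rfl
    rw [hofn, hx t.1 t.2]
    exact ht
  · intro a _ b _ hab
    apply Fin.ext
    simpa using congrArg Fin.val hab

/-- the adversarial label history against a fixed learner -/
def advList (g : List Bool → Bool) : ℕ → List Bool
  | 0 => []
  | t + 1 => advList g t ++ [!g (advList g t)]

lemma advList_eq_ofFn (g : List Bool → Bool) :
    ∀ t, advList g t = List.ofFn (fun i : Fin t => !g (advList g i.1)) := by
  intro t
  induction t with
  | zero => simp [advList]
  | succ t ih =>
      rw [advList, List.ofFn_succ', List.concat_eq_append, ih]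
      congr 1
      rw [← ih]
      rfl

lemma vc_force {H : Set (X → Bool)} {s : Finset X} (hs : Shatters H s) {n : ℕ}
    (hmn : s.card ≤ n) (hm : 1 ≤ s.card) (A : (Fin n → X) → List Bool → Bool) :
    ∃ (x : Fin n → X) (h : X → Bool), h ∈ H ∧ s.card ≤ mistakes A x h := by
  set m := s.card with hmdef
  set eF : Fin m → X := fun i => (s.equivFin.symm i : X) with heF
  set x : Fin n → X := fun i => if hi : i.1 < m then eF ⟨i.1, hi⟩ else eF ⟨0, hm⟩ with hxdef
  set g : List Bool → Bool := A x with hgdef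
  set f : X → Bool := fun a => if ha : a ∈ s then !g (advList g (s.equivFin ⟨a, ha⟩).1) else false
    with hfdef
  obtain ⟨h, hH, hf⟩ := hs f
  have hkey : ∀ i : Fin m, h (eF i) = !g (advList g i.1) := by
    intro i
    have hmem : (eF i) ∈ s := (s.equivFin.symm i).2
    rw [hf (eF i) hmem, hfdef]
    simp only [dif_pos hmem]
    have : (⟨eF i, hmem⟩ : {a // a ∈ s}) = s.equivFin.symm i := Subtype.ext rfl
    rw [this, Equiv.apply_symm_apply]
  refine ⟨x, h, hH, ?_⟩
  -- every position t < m is a mistake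
  have hmis : ∀ t : Fin n, t.1 < m →
      A x (List.ofFn (fun i : Fin t.1 => h (x ⟨i.1, i.2.trans t.2⟩))) ≠ h (x t) := by
    intro t htm
    have hpre : List.ofFn (fun i : Fin t.1 => h (x ⟨i.1, i.2.trans t.2⟩)) = advList g t.1 := by
      rw [advList_eq_ofFn]
      apply List.ext_getElem
      · simp
      · intro i hi1 hi2
        have hit : i < t.1 := by simpa using hi1
        simp only [List.getElem_ofFn]
        have hxv : x ⟨i, hit.trans t.2⟩ = eF ⟨i, hit.trans htm⟩ := by
          rw [hxdef]; simp only [dif_pos (hit.trans htm)]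
        rw [hxv, hkey ⟨i, hit.trans htm⟩]
    have hxt : x t = eF ⟨t.1, htm⟩ := by rw [hxdef]; simp only [dif_pos htm]
    rw [hpre, hxt, hkey ⟨t.1, htm⟩]
    simp [hgdef]
  rw [mistakes, show m = Fintype.card (Fin m) from (Fintype.card_fin m).symm,
    ← Finset.card_univ]
  apply Finset.card_le_card_of_injOn (fun i : Fin m => (⟨i.1, lt_of_lt_of_le i.2 hmn⟩ : Fin n))
  · intro i _
    simp only [Finset.mem_coe, Finset.mem_filter, Finset.mem_univ, true_and]
    exact hmis ⟨i.1, lt_of_lt_of_le i.2 hmn⟩ i.2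
  · intro a _ b _ hab
    exact Fin.ext (by simpa using congrArg Fin.val hab)
end

section
universe u
variable {X : Type u}

lemma ldge'_of_ldge {H : Set (X → Bool)} {d : ℕ} (h : LDge H d) : LDge' H d := h

lemma vcdim_ge_one {H : Set (X → Bool)} {v : ℕ} (hVC : VCdim H = (v : ℕ∞))
    (hLD : Ldim H = ⊤) : 1 ≤ v ∧ Nonempty X := by
  obtain ⟨xt, hxt⟩ := ldge_all hLD 1
  set x₀ := xt []
  have hsh : Shatters H {x₀} := by
    intro f
    obtain ⟨h, hH, hh⟩ := hxt [f x₀] rfl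
    have := hh 0 (by simp)
    refine ⟨h, hH, fun a ha => ?_⟩
    rw [Finset.mem_singleton] at ha
    subst ha
    simpa using this
  have := shatters_card_le hVC hsh
  simp at this
  exact ⟨by omega, ⟨x₀⟩⟩

lemma lower_bound {H : Set (X → Bool)} {v : ℕ} (hVC : VCdim H = (v : ℕ∞))
    (hLD : Ldim H = ⊤) (n : ℕ) (A : (Fin n → X) → List Bool → Bool) :
    ∃ x : Fin n → X, ∃ h ∈ H,
      max (min v n) (Nat.log 2 n) ≤ mistakes A x h := by
  have hne := H_nonempty hLD
  obtain ⟨hv1, ⟨x₀⟩⟩ := vcdim_ge_one hVC hLD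
  rcases Nat.eq_zero_or_pos n with rfl | hn
  · refine ⟨fun _ => x₀, hne.choose, hne.choose_spec, ?_⟩
    simp
  rcases le_total (Nat.log 2 n) (min v n) with hc | hc
  · -- VC adversary
    rw [max_eq_left hc]
    obtain ⟨s, hcard, hsh⟩ := exists_shattered hVC hne (min_le_left v n)
    obtain ⟨x, h, hH, hm⟩ := vc_force hsh (n := n) (by omega) (by omega) A
    exact ⟨x, h, hH, by omega⟩
  · -- threshold / tree adversary
    rw [max_eq_right hc]
    set k := Nat.log 2 n with hk
    obtain ⟨zs, hlen, hforce⟩ := log_force (fun d => ldge'_of_ldge (ldge_all hLD d)) k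
    have h2k : 2 ^ k ≤ n := Nat.pow_log_le_self 2 (by omega)
    have hzn : zs.length ≤ n := by omega
    set x : Fin n → X := fun i => if hi : i.1 < zs.length then zs.get ⟨i.1, hi⟩ else x₀
      with hxdef
    obtain ⟨h, hH, hkm⟩ := hforce (A x)
    refine ⟨x, h, hH, le_trans hkm (mist_le_mistakes A x zs h hzn ?_)⟩
    intro i hi
    rw [hxdef]
    simp only [dif_pos hi]
end

section
universe u
variable {X : Type u}

/-- the restriction of `H` to the sample `x`, as a finite set of functions -/
noncomputable def Hres {n : ℕ} (H : Set (X → Bool)) (x : Fin n → X) :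
    Finset (Fin n → Bool) :=
  Finset.univ.filter (fun g => ∃ h ∈ H, ∀ i, h (x i) = g i)

/-- version space after seeing the labels `l` -/
noncomputable def ver {n : ℕ} (H : Set (X → Bool)) (x : Fin n → X) (l : List Bool) :
    Finset (Fin n → Bool) :=
  (Hres H x).filter (fun g => ∀ i : Fin n, i.1 < l.length → g i = l.getD i.1 false)

/-- the halving (majority) learner -/
noncomputable def halving {n : ℕ} (H : Set (X → Bool)) :
    (Fin n → X) → List Bool → Bool := fun x l =>
  decide ((ver H x l).card ≤
    2 * ((ver H x l).filter (fun g => ∀ hl : l.length < n, g ⟨l.length, hl⟩ = true)).card)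

section Halving

variable {n : ℕ} {H : Set (X → Bool)} (x : Fin n → X) (h : X → Bool)

/-- the deterministic version space along the true labels -/
noncomputable def W (t : ℕ) : Finset (Fin n → Bool) :=
  (Hres H x).filter (fun g => ∀ i : Fin n, i.1 < t → g i = h (x i))

lemma mem_W (hH : h ∈ H) (t : ℕ) : (fun i => h (x i)) ∈ W (H := H) x h t := by
  rw [W, Finset.mem_filter]
  exact ⟨by rw [Hres, Finset.mem_filter]; exact ⟨Finset.mem_univ _, h, hH, fun _ => rfl⟩,
    fun i _ => rfl⟩

lemma W_succ (t : ℕ) : W (H := H) x h (t + 1) =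
    (W (H := H) x h t).filter (fun g => ∀ ht : t < n, g ⟨t, ht⟩ = h (x ⟨t, ht⟩)) := by
  rw [W, W, Finset.filter_filter]
  apply Finset.filter_congr
  intro g _
  constructor
  · intro hg
    refine ⟨fun i hi => hg i (by omega), fun ht => hg ⟨t, ht⟩ (Nat.lt_succ_self t)⟩
  · rintro ⟨h1, h2⟩ i hi
    rcases Nat.lt_or_ge i.1 t with hit | hit
    · exact h1 i hit
    · have : i.1 = t := by omega
      have hieq : i = ⟨t, by omega⟩ := Fin.ext this
      rw [hieq]
      exact h2 _

lemma W_succ_subset (t : ℕ) : W (H := H) x h (t + 1) ⊆ W (H := H) x h t := by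
  rw [W_succ]; exact Finset.filter_subset _ _

/-- the label list fed to the learner at step `t` -/
lemma ver_eq_W (t : ℕ) (ht : t ≤ n) :
    ver H x (List.ofFn (fun i : Fin t => h (x ⟨i.1, lt_of_lt_of_le i.2 ht⟩))) =
      W (H := H) x h t := by
  rw [ver, W]
  apply Finset.filter_congr
  intro g _
  have hlen : (List.ofFn (fun i : Fin t => h (x ⟨i.1, lt_of_lt_of_le i.2 ht⟩))).length = t :=
    List.length_ofFn
  constructor
  · intro hg i hi
    have := hg i (by omega)
    rwa [List.getD_eq_getElem _ _ (by omega), List.getElem_ofFn] at this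
  · intro hg i hi
    rw [hlen] at hi
    rw [List.getD_eq_getElem _ _ (by omega), List.getElem_ofFn]
    exact hg i hi

lemma halving_pred (l : List Bool) (t : ℕ) (ht : t < n) (hlen : l.length = t) :
    halving H x l = decide ((ver H x l).card ≤
      2 * ((ver H x l).filter (fun g => g ⟨t, ht⟩ = true)).card) := by
  subst hlen
  rw [halving]
  have hfe : (ver H x l).filter (fun g => ∀ hl : l.length < n, g ⟨l.length, hl⟩ = true) =
      (ver H x l).filter (fun g => g ⟨l.length, ht⟩ = true) :=
    Finset.filter_congr (fun g _ => ⟨fun hg => hg ht, fun hg _ => hg⟩)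
  rw [hfe]

lemma halving_step (t : ℕ) (ht : t < n)
    (hmis : halving H x (List.ofFn (fun i : Fin t => h (x ⟨i.1, i.2.trans ht⟩)))
      ≠ h (x ⟨t, ht⟩)) :
    2 * (W (H := H) x h (t + 1)).card ≤ (W (H := H) x h t).card := by
  have hlen : (List.ofFn (fun i : Fin t => h (x ⟨i.1, i.2.trans ht⟩))).length = t :=
    List.length_ofFn
  rw [halving_pred x _ t ht hlen] at hmis
  have hver : ver H x (List.ofFn (fun i : Fin t => h (x ⟨i.1, i.2.trans ht⟩)))
      = W (H := H) x h t := ver_eq_W x h t (le_of_lt ht)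
  rw [hver] at hmis
  have hWsucc : W (H := H) x h (t + 1) =
      (W (H := H) x h t).filter (fun g => g ⟨t, ht⟩ = h (x ⟨t, ht⟩)) := by
    rw [W_succ]
    apply Finset.filter_congr
    intro g _
    exact ⟨fun hg => hg ht, fun hg _ => hg⟩
  have hfneg : ((W (H := H) x h t).filter (fun g => ¬ (g ⟨t, ht⟩ = true))) =
      ((W (H := H) x h t).filter (fun g => g ⟨t, ht⟩ = false)) :=
    Finset.filter_congr (fun g _ => by simp)
  have hsplit : ((W (H := H) x h t).filter (fun g => g ⟨t, ht⟩ = true)).card +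
      ((W (H := H) x h t).filter (fun g => g ⟨t, ht⟩ = false)).card
      = (W (H := H) x h t).card := by
    rw [← hfneg]
    rw [Finset.card_filter_add_card_filter_not]
  rw [hWsucc]
  rcases Bool.eq_false_or_eq_true (h (x ⟨t, ht⟩)) with hb | hb
  · rw [hb] at hmis ⊢
    have hpred : ¬ ((W (H := H) x h t).card ≤
        2 * ((W (H := H) x h t).filter (fun g => g ⟨t, ht⟩ = true)).card) := by
      intro hcon
      exact hmis (by simp [hcon])
    clear hmis hlen hver hWsucc hfneg hb
    generalize ((W (H := H) x h t).filter (fun g => g ⟨t, ht⟩ = true)).card = TC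
      at hsplit hpred ⊢
    generalize ((W (H := H) x h t).filter (fun g => g ⟨t, ht⟩ = false)).card = FC
      at hsplit
    generalize (W (H := H) x h t).card = VC at hsplit hpred ⊢
    omega
  · rw [hb] at hmis ⊢
    have hpred : (W (H := H) x h t).card ≤
        2 * ((W (H := H) x h t).filter (fun g => g ⟨t, ht⟩ = true)).card := by
      by_contra hcon
      exact hmis (by simp [hcon])
    clear hmis hlen hver hWsucc hfneg hb
    generalize ((W (H := H) x h t).filter (fun g => g ⟨t, ht⟩ = true)).card = TC
      at hsplit hpred
    generalize ((W (H := H) x h t).filter (fun g => g ⟨t, ht⟩ = false)).card = FC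
      at hsplit ⊢
    generalize (W (H := H) x h t).card = VC at hsplit hpred ⊢
    omega

end Halving
end

section
universe u
variable {X : Type u}

section Count

variable {n : ℕ} {H : Set (X → Bool)} (x : Fin n → X) (h : X → Bool)

/-- mistake predicate for the halving learner -/
def MisP (s : Fin n) : Prop :=
  halving H x (List.ofFn (fun i : Fin s.1 => h (x ⟨i.1, i.2.trans s.2⟩))) ≠ h (x s)

/-- number of mistakes among the first `t` rounds -/
noncomputable def mcount (t : ℕ) : ℕ :=
  ∑ s : Fin n, if s.1 < t ∧ MisP (H := H) x h s then 1 else 0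

lemma mcount_succ (t : ℕ) : mcount (H := H) x h (t + 1) =
    mcount (H := H) x h t + ∑ s : Fin n, if s.1 = t ∧ MisP (H := H) x h s then 1 else 0 := by
  rw [mcount, mcount, ← Finset.sum_add_distrib]
  apply Finset.sum_congr rfl
  intro s _
  by_cases hP : MisP (H := H) x h s
  · by_cases h1 : s.1 < t
    · have h2 : ¬ (s.1 = t) := by omega
      have h3 : s.1 < t + 1 := by omega
      simp [hP, h1, h2, h3]
    · by_cases h2 : s.1 = t
      · have h3 : s.1 < t + 1 := by omega
        simp [hP, h1, h2, h3]
      · have h3 : ¬ (s.1 < t + 1) := by omega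
        simp [hP, h1, h2, h3]
  · simp [hP]

lemma mcount_succ_lt (t : ℕ) (ht : t < n) :
    mcount (H := H) x h (t + 1) =
      mcount (H := H) x h t + (if MisP (H := H) x h ⟨t, ht⟩ then 1 else 0) := by
  rw [mcount_succ]
  congr 1
  rw [Finset.sum_eq_single (⟨t, ht⟩ : Fin n)]
  · by_cases hP : MisP (H := H) x h ⟨t, ht⟩ <;> simp [hP]
  · intro s _ hs
    have : ¬ (s.1 = t) := fun hc => hs (Fin.ext hc)
    simp [this]
  · intro hs
    exact absurd (Finset.mem_univ _) hs

lemma mcount_succ_ge (t : ℕ) (ht : n ≤ t) :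
    mcount (H := H) x h (t + 1) = mcount (H := H) x h t := by
  rw [mcount_succ]
  have : ∀ s : Fin n, (if s.1 = t ∧ MisP (H := H) x h s then 1 else 0) = 0 := by
    intro s
    have : ¬ (s.1 = t) := by omega
    simp [this]
  rw [Finset.sum_congr rfl (fun s _ => this s)]
  simp

lemma pow_mcount_le (hH : h ∈ H) :
    ∀ t, 2 ^ (mcount (H := H) x h t) * (W (H := H) x h t).card ≤ (W (H := H) x h 0).card := by
  intro t
  induction t with
  | zero => simp [mcount]
  | succ t ih =>
      rcases Nat.lt_or_ge t n with ht | ht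
      · rw [mcount_succ_lt x h t ht]
        by_cases hP : MisP (H := H) x h ⟨t, ht⟩
        · rw [if_pos hP]
          have hstep := halving_step x h t ht hP
          calc 2 ^ (mcount (H := H) x h t + 1) * (W (H := H) x h (t + 1)).card
              = 2 ^ (mcount (H := H) x h t) * (2 * (W (H := H) x h (t + 1)).card) := by ring
            _ ≤ 2 ^ (mcount (H := H) x h t) * (W (H := H) x h t).card :=
                Nat.mul_le_mul_left _ hstep
            _ ≤ _ := ih
        · rw [if_neg hP]
          simp only [Nat.add_zero]
          calc 2 ^ (mcount (H := H) x h t) * (W (H := H) x h (t + 1)).card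
              ≤ 2 ^ (mcount (H := H) x h t) * (W (H := H) x h t).card :=
                Nat.mul_le_mul_left _ (Finset.card_le_card (W_succ_subset x h t))
            _ ≤ _ := ih
      · rw [mcount_succ_ge x h t ht]
        calc 2 ^ (mcount (H := H) x h t) * (W (H := H) x h (t + 1)).card
            ≤ 2 ^ (mcount (H := H) x h t) * (W (H := H) x h t).card :=
              Nat.mul_le_mul_left _ (Finset.card_le_card (W_succ_subset x h t))
          _ ≤ _ := ih

lemma W_zero : W (H := H) x h 0 = Hres H x := by
  rw [W]
  apply Finset.filter_true_of_mem
  intro g _ i hi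
  omega

lemma halving_mistakes_eq : mistakes (halving H) x h = mcount (H := H) x h n := by
  rw [mistakes, mcount, Finset.card_filter]
  apply Finset.sum_congr rfl
  intro s _
  have hs : s.1 < n := s.2
  by_cases hP : halving H x (List.ofFn (fun i : Fin s.1 => h (x ⟨i.1, i.2.trans s.2⟩))) ≠ h (x s)
  · rw [if_pos hP, if_pos (⟨hs, hP⟩ : s.1 < n ∧ MisP (H := H) x h s)]
  · rw [if_neg hP, if_neg (fun hc : s.1 < n ∧ MisP (H := H) x h s => hP hc.2)]

lemma halving_pow_bound (hH : h ∈ H) :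
    2 ^ (mistakes (halving H) x h) ≤ (Hres H x).card := by
  have h1 := pow_mcount_le x h hH n
  have h2 : 1 ≤ (W (H := H) x h n).card :=
    Finset.card_pos.mpr ⟨_, mem_W x h hH n⟩
  rw [W_zero] at h1
  rw [halving_mistakes_eq]
  calc 2 ^ (mcount (H := H) x h n) = 2 ^ (mcount (H := H) x h n) * 1 := by ring
    _ ≤ 2 ^ (mcount (H := H) x h n) * (W (H := H) x h n).card := Nat.mul_le_mul_left _ h2
    _ ≤ _ := h1

end Count

section Sauer

lemma choose_le_pow (n : ℕ) : ∀ k, n.choose k ≤ n ^ k := by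
  intro k
  induction k with
  | zero => simp
  | succ k ih =>
      have hid := Nat.choose_succ_right_eq n k
      have h1 : n.choose (k + 1) ≤ n.choose (k + 1) * (k + 1) := Nat.le_mul_of_pos_right _ (by omega)
      calc n.choose (k + 1) ≤ n.choose (k + 1) * (k + 1) := h1
        _ = n.choose k * (n - k) := hid
        _ ≤ n ^ k * n := Nat.mul_le_mul ih (by omega)
        _ = n ^ (k + 1) := by ring

lemma sum_choose_le (n v : ℕ) : ∑ i ∈ Finset.range (v + 1), n.choose i ≤ (n + 1) ^ v := by
  induction v with
  | zero => simp
  | succ v ih =>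
      rw [Finset.sum_range_succ]
      have h1 : n.choose (v + 1) ≤ n ^ (v + 1) := choose_le_pow n (v + 1)
      have h2 : n ^ (v + 1) ≤ n * (n + 1) ^ v := by
        rw [pow_succ]
        rw [mul_comm]
        exact Nat.mul_le_mul_left n (Nat.pow_le_pow_left (by omega) v)
      have h3 : (n + 1) ^ (v + 1) = (n + 1) ^ v + n * (n + 1) ^ v := by ring
      omega

variable {n : ℕ} {H : Set (X → Bool)}

lemma Hres_card_le {v : ℕ} (hVC : VCdim H = (v : ℕ∞)) (x : Fin n → X) :
    (Hres H x).card ≤ (n + 1) ^ v := by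
  classical
  set toSet : (Fin n → Bool) → Finset (Fin n) :=
    fun g => Finset.univ.filter (fun i => g i = true) with htoSet
  have hinj : Set.InjOn toSet (Hres H x) := by
    intro g hg g' hg' hgg
    funext i
    have := Finset.ext_iff.mp hgg i
    simp only [htoSet, Finset.mem_filter, Finset.mem_univ, true_and] at this
    cases hgi : g i <;> cases hgi' : g' i <;> simp [hgi, hgi'] at this ⊢
  set 𝒜 := (Hres H x).image toSet with h𝒜
  have hcard : (Hres H x).card = 𝒜.card := (Finset.card_image_of_injOn hinj).symm
  have hpajor : 𝒜.card ≤ 𝒜.shatterer.card := Finset.card_le_card_shatterer 𝒜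
  -- every set shattered by 𝒜 has size at most v
  have hshat : ∀ s ∈ 𝒜.shatterer, s.card ≤ v := by
    intro s hs
    rw [Finset.mem_shatterer] at hs
    -- x is injective on s
    have hxinj : Set.InjOn (fun i : Fin n => x i) s := by
      intro i hi j hj hxij
      by_contra hij
      obtain ⟨u, hu, hsu⟩ := hs.exists_inter_eq_singleton (by exact_mod_cast hi)
      rw [h𝒜, Finset.mem_image] at hu
      obtain ⟨g, hg, rfl⟩ := hu
      rw [Hres, Finset.mem_filter] at hg
      obtain ⟨h', hh', hgx⟩ := hg.2
      have hgi : g i = true := by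
        have : i ∈ s ∩ toSet g := by rw [hsu]; simp
        simp only [htoSet, Finset.mem_inter, Finset.mem_filter] at this
        exact this.2.2
      have hgj : g j = false := by
        have : j ∉ s ∩ toSet g := by
          rw [hsu]
          simp only [Finset.mem_singleton]
          exact fun hc => hij hc.symm
        simp only [htoSet, Finset.mem_inter, Finset.mem_filter, Finset.mem_univ, true_and,
          not_and] at this
        have := this (by exact_mod_cast hj)
        simpa using this
      have hgij : g i = g j := by
        rw [← hgx i, ← hgx j]
        exact congrArg h' hxij
      rw [hgi, hgj] at hgij
      exact absurd hgij (by simp)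
    -- the image of s under x is shattered by H
    have hshatX : Shatters H (s.image (fun i : Fin n => x i)) := by
      intro f
      have hsub : s.filter (fun i => f (x i) = true) ⊆ s := Finset.filter_subset _ _
      obtain ⟨u, hu, hsu⟩ := hs hsub
      rw [h𝒜, Finset.mem_image] at hu
      obtain ⟨g, hg, rfl⟩ := hu
      rw [Hres, Finset.mem_filter] at hg
      obtain ⟨h', hh', hgx⟩ := hg.2
      refine ⟨h', hh', ?_⟩
      intro a ha
      rw [Finset.mem_image] at ha
      obtain ⟨i, hi, rfl⟩ := ha
      have hiff : (i ∈ s ∩ toSet g) ↔ (i ∈ s.filter (fun i => f (x i) = true)) := by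
        rw [hsu]
      simp only [htoSet, Finset.mem_inter, Finset.mem_filter, Finset.mem_univ, true_and] at hiff
      rw [hgx i]
      cases hfa : f (x i)
      · have : ¬ (g i = true) := fun hc => by
          have := hiff.mp ⟨hi, hc⟩
          rw [hfa] at this
          exact Bool.false_ne_true this.2
        simpa using this
      · exact (hiff.mpr ⟨hi, hfa⟩).2
    have hcardim : (s.image (fun i : Fin n => x i)).card = s.card :=
      Finset.card_image_of_injOn hxinj
    have := shatters_card_le hVC hshatX
    omega
  have hsub : 𝒜.shatterer ⊆ (Finset.range (v + 1)).biUnion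
      (fun i => (Finset.univ : Finset (Fin n)).powersetCard i) := by
    intro s hs
    rw [Finset.mem_biUnion]
    exact ⟨s.card, by simp [Nat.lt_succ_iff, hshat s hs],
      by rw [Finset.mem_powersetCard]; exact ⟨Finset.subset_univ _, rfl⟩⟩
  have hcard2 : 𝒜.shatterer.card ≤ ∑ i ∈ Finset.range (v + 1), (n.choose i) := by
    calc 𝒜.shatterer.card ≤ ((Finset.range (v + 1)).biUnion
        (fun i => (Finset.univ : Finset (Fin n)).powersetCard i)).card :=
          Finset.card_le_card hsub
      _ ≤ ∑ i ∈ Finset.range (v + 1), ((Finset.univ : Finset (Fin n)).powersetCard i).card :=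
          Finset.card_biUnion_le
      _ = ∑ i ∈ Finset.range (v + 1), (n.choose i) := by
          apply Finset.sum_congr rfl
          intro i _
          rw [Finset.card_powersetCard]
          simp
  calc (Hres H x).card = 𝒜.card := hcard
    _ ≤ 𝒜.shatterer.card := hpajor
    _ ≤ ∑ i ∈ Finset.range (v + 1), (n.choose i) := hcard2
    _ ≤ (n + 1) ^ v := sum_choose_le n v

end Sauer
end

section
universe u
variable {X : Type u}

lemma upper_bound {H : Set (X → Bool)} {v : ℕ} (hVC : VCdim H = (v : ℕ∞)) (hv : 1 ≤ v) :
    ∃ C : ℝ, 0 < C ∧ ∀ n : ℕ, 1 ≤ n →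
      ∃ A : (Fin n → X) → List Bool → Bool,
        ∀ x : Fin n → X, ∀ h ∈ H,
          (mistakes A x h : ℝ) ≤ C * v * Real.log ((n : ℝ) / v + 2) := by
  have hlog2 : (0 : ℝ) < Real.log 2 := Real.log_pos (by norm_num)
  have hvR : (1 : ℝ) ≤ (v : ℝ) := by exact_mod_cast hv
  have hlogv : (0 : ℝ) ≤ Real.log v := Real.log_nonneg hvR
  refine ⟨(Real.log v / Real.log 2 + 1) / Real.log 2, by positivity, ?_⟩
  intro n hn
  refine ⟨halving H, ?_⟩
  intro x h hH
  set M := mistakes (halving H) x h with hM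
  set L := Real.log ((n : ℝ) / v + 2) with hL
  have hnR : (0 : ℝ) ≤ (n : ℝ) := by positivity
  have hvpos : (0 : ℝ) < (v : ℝ) := by linarith
  have hpow : 2 ^ M ≤ (n + 1) ^ v :=
    le_trans (halving_pow_bound x h hH) (Hres_card_le hVC x)
  have hpowR : (2 : ℝ) ^ M ≤ ((n : ℝ) + 1) ^ v := by exact_mod_cast hpow
  have h1 : (M : ℝ) * Real.log 2 ≤ (v : ℝ) * Real.log ((n : ℝ) + 1) := by
    have := Real.log_le_log (by positivity) hpowR
    rwa [Real.log_pow, Real.log_pow] at this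
  have hL2 : Real.log 2 ≤ L := by
    rw [hL]
    apply Real.log_le_log (by norm_num)
    have : (0 : ℝ) ≤ (n : ℝ) / v := by positivity
    linarith
  have h2 : Real.log ((n : ℝ) + 1) ≤ Real.log v + L := by
    have hprod : (v : ℝ) * ((n : ℝ) / v + 2) = (n : ℝ) + 2 * v := by
      field_simp
    have harg : ((n : ℝ) + 1) ≤ (v : ℝ) * ((n : ℝ) / v + 2) := by
      rw [hprod]; linarith
    have hlog := Real.log_le_log (by positivity) harg
    rwa [Real.log_mul (by positivity) (by positivity)] at hlog
  have h4 : Real.log v + L ≤ (Real.log v / Real.log 2 + 1) * L := by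
    have hd : (Real.log v / Real.log 2) * Real.log 2 = Real.log v := by
      field_simp
    have hmul : (Real.log v / Real.log 2) * Real.log 2 ≤ (Real.log v / Real.log 2) * L :=
      mul_le_mul_of_nonneg_left hL2 (by positivity)
    nlinarith
  have h5 : (M : ℝ) * Real.log 2 ≤ (v : ℝ) * ((Real.log v / Real.log 2 + 1) * L) := by
    calc (M : ℝ) * Real.log 2 ≤ (v : ℝ) * Real.log ((n : ℝ) + 1) := h1
      _ ≤ (v : ℝ) * (Real.log v + L) := mul_le_mul_of_nonneg_left h2 (by positivity)
      _ ≤ _ := mul_le_mul_of_nonneg_left h4 (by positivity)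
  have hfin : (M : ℝ) ≤ ((v : ℝ) * ((Real.log v / Real.log 2 + 1) * L)) / Real.log 2 :=
    (le_div_iff₀ hlog2).mpr h5
  calc (M : ℝ) ≤ ((v : ℝ) * ((Real.log v / Real.log 2 + 1) * L)) / Real.log 2 := hfin
    _ = (Real.log v / Real.log 2 + 1) / Real.log 2 * v * L := by ring
end

/-- The middle case of the trichotomy: if `VC(H) = v < ∞` and `LD(H) = ∞`, then for every
`n ≤ |X|` the adversary can force `max(min(v,n), ⌊log₂ n⌋)` mistakes, and there is a
constant `C` (depending only on `H`) such that the learner can guarantee at most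
`C·v·log(n/v + 2) = O(v·log(n/v))` mistakes; in particular `M(H,n) = Θ(log n)` for
fixed `H`. -/
theorem trichotomy_middle_case {X : Type*} (H : Set (X → Bool)) (v : ℕ)
    (hVC : VCdim H = (v : ℕ∞)) (hLD : Ldim H = ⊤) :
    (∀ n : ℕ, (∃ s : Finset X, s.card = n) →
      ∀ A : (Fin n → X) → List Bool → Bool,
        ∃ x : Fin n → X, ∃ h ∈ H,
          max (min v n) (Nat.log 2 n) ≤ mistakes A x h) ∧
    (∃ C : ℝ, 0 < C ∧ ∀ n : ℕ, 1 ≤ n →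
      ∃ A : (Fin n → X) → List Bool → Bool,
        ∀ x : Fin n → X, ∀ h ∈ H,
          (mistakes A x h : ℝ) ≤ C * v * Real.log ((n : ℝ) / v + 2)) :=
  ⟨fun n _ A => lower_bound hVC hLD n A, upper_bound hVC (vcdim_ge_one hVC hLD).1⟩
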